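/- arXiv:1405.1768 — 2 statements merged into one kernel-verified Lean document; each statement's English description precedes it below -/
import Mathlib

section
/- For every k > 0 and every choice of sign σ ∈ {+1, −1}, the function x : ℝ → (ℤ → ℝ) given by x_n(t) = −ln[ (1 + exp(−2kn + 2σ sinh(k) t)) / (1 + exp(−2k(n−1) + 2σ sinh(k) t)) ] is twice differentiable in t and satisfies the Toda lattice equation ẍ_n = e^{x_{n−1} − x_n} − e^{x_n − x_{n+1}} for all n ∈ ℤ and all t ∈ ℝ. -/
private lemma toda_aux_g (a c t : ℝ) :
    HasDerivAt (fun t => 1 + Real.exp (a + c * t)) (c * Real.exp (a + c * t)) t := by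
  have h1 : HasDerivAt (fun t : ℝ => a + c * t) c t := by
    simpa using ((hasDerivAt_id t).const_mul c).const_add a
  simpa [mul_comm] using (h1.exp.const_add 1)

private lemma toda_aux_log (a c t : ℝ) :
    HasDerivAt (fun t => Real.log (1 + Real.exp (a + c * t)))
      (c * Real.exp (a + c * t) / (1 + Real.exp (a + c * t))) t := by
  have hpos : (0:ℝ) < 1 + Real.exp (a + c * t) := by positivity
  simpa [mul_comm, mul_div_assoc] using (toda_aux_g a c t).log hpos.ne'

private lemma toda_aux_D (a c t : ℝ) :
    HasDerivAt (fun t => c * Real.exp (a + c * t) / (1 + Real.exp (a + c * t)))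
      (c ^ 2 * Real.exp (a + c * t) / (1 + Real.exp (a + c * t)) ^ 2) t := by
  have hpos : (0:ℝ) < 1 + Real.exp (a + c * t) := by positivity
  have h1 : HasDerivAt (fun t : ℝ => a + c * t) c t := by
    simpa using ((hasDerivAt_id t).const_mul c).const_add a
  have hu : HasDerivAt (fun t => c * Real.exp (a + c * t)) (c * (Real.exp (a + c * t) * c)) t :=
    h1.exp.const_mul c
  have : HasDerivAt (fun t => c * Real.exp (a + c * t) / (1 + Real.exp (a + c * t)))
      ((c * (Real.exp (a + c * t) * c) * (1 + Real.exp (a + c * t)) -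
        c * Real.exp (a + c * t) * (c * Real.exp (a + c * t))) /
      (1 + Real.exp (a + c * t)) ^ 2) t := hu.div (toda_aux_g a c t) hpos.ne'
  convert this using 1
  have hE := Real.exp_pos (a + c * t)
  field_simp
  ring

/-- For every `k > 0` and sign `σ ∈ {+1, −1}`, the function
`x_n(t) = −ln[(1 + exp(−2kn + 2σ sinh(k) t)) / (1 + exp(−2k(n−1) + 2σ sinh(k) t))]`
is twice differentiable in `t` and solves the Toda lattice
`ẍ_n = e^{x_{n−1} − x_n} − e^{x_n − x_{n+1}}`. -/
theorem toda_one_soliton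
    (k : ℝ) (hk : 0 < k) (σ : ℝ) (hσ : σ = 1 ∨ σ = -1)
    (x : ℝ → ℤ → ℝ)
    (hx : ∀ (t : ℝ) (n : ℤ),
      x t n = -Real.log
        ((1 + Real.exp (-2 * k * (n : ℝ) + 2 * σ * Real.sinh k * t)) /
         (1 + Real.exp (-2 * k * ((n : ℝ) - 1) + 2 * σ * Real.sinh k * t)))) :
    ∀ n : ℤ,
      Differentiable ℝ (fun t => x t n) ∧
      Differentiable ℝ (deriv (fun t => x t n)) ∧
      ∀ t : ℝ,
        deriv (deriv (fun s => x s n)) t =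
          Real.exp (x t (n - 1) - x t n) - Real.exp (x t n - x t (n + 1)) := by
  intro n
  set c : ℝ := 2 * σ * Real.sinh k with hc
  have hgpos : ∀ (m t : ℝ), (0:ℝ) < 1 + Real.exp (-2 * k * m + c * t) := fun m t => by positivity
  have hxeq : ∀ (t : ℝ) (m : ℤ), x t m =
      Real.log (1 + Real.exp (-2 * k * ((m : ℝ) - 1) + c * t))
        - Real.log (1 + Real.exp (-2 * k * (m : ℝ) + c * t)) := by
    intro t m
    rw [hx, Real.log_div (hgpos _ _).ne' (hgpos _ _).ne']
    ring
  have hfun : (fun t => x t n) = fun t =>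
      Real.log (1 + Real.exp (-2 * k * ((n : ℝ) - 1) + c * t))
        - Real.log (1 + Real.exp (-2 * k * (n : ℝ) + c * t)) :=
    funext fun t => hxeq t n
  have hD1 : ∀ t : ℝ, HasDerivAt (fun t => x t n)
      (c * Real.exp (-2 * k * ((n : ℝ) - 1) + c * t) / (1 + Real.exp (-2 * k * ((n : ℝ) - 1) + c * t))
        - c * Real.exp (-2 * k * (n : ℝ) + c * t) / (1 + Real.exp (-2 * k * (n : ℝ) + c * t))) t := by
    intro t
    rw [hfun]
    exact (toda_aux_log _ c t).sub (toda_aux_log _ c t)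
  have hderiv1 : deriv (fun t => x t n) = fun t =>
      c * Real.exp (-2 * k * ((n : ℝ) - 1) + c * t) / (1 + Real.exp (-2 * k * ((n : ℝ) - 1) + c * t))
        - c * Real.exp (-2 * k * (n : ℝ) + c * t) / (1 + Real.exp (-2 * k * (n : ℝ) + c * t)) :=
    funext fun t => (hD1 t).deriv
  have hD2 : ∀ t : ℝ, HasDerivAt (fun t =>
      c * Real.exp (-2 * k * ((n : ℝ) - 1) + c * t) / (1 + Real.exp (-2 * k * ((n : ℝ) - 1) + c * t))
        - c * Real.exp (-2 * k * (n : ℝ) + c * t) / (1 + Real.exp (-2 * k * (n : ℝ) + c * t)))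
      (c ^ 2 * Real.exp (-2 * k * ((n : ℝ) - 1) + c * t)
          / (1 + Real.exp (-2 * k * ((n : ℝ) - 1) + c * t)) ^ 2
        - c ^ 2 * Real.exp (-2 * k * (n : ℝ) + c * t)
          / (1 + Real.exp (-2 * k * (n : ℝ) + c * t)) ^ 2) t :=
    fun t => (toda_aux_D _ c t).sub (toda_aux_D _ c t)
  refine ⟨fun t => (hD1 t).differentiableAt, ?_, ?_⟩
  · rw [hderiv1]
    exact fun t => (hD2 t).differentiableAt
  · intro t
    rw [hderiv1, (hD2 t).deriv]
    rw [hxeq t (n - 1), hxeq t n, hxeq t (n + 1)]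
    push_cast
    simp only [Real.exp_sub, Real.exp_log (hgpos _ _)]
    -- now express everything in terms of u = exp(-2kn+ct) and r = exp k
    have e1 : Real.exp (-2 * k * ((n : ℝ) - 1) + c * t)
        = Real.exp k * Real.exp k * Real.exp (-2 * k * (n : ℝ) + c * t) := by
      rw [show -2 * k * ((n : ℝ) - 1) + c * t = k + k + (-2 * k * (n : ℝ) + c * t) by ring,
        Real.exp_add, Real.exp_add]
    have e2 : Real.exp (-2 * k * ((n : ℝ) - 1 - 1) + c * t)
        = Real.exp k * Real.exp k * (Real.exp k * Real.exp k *
            Real.exp (-2 * k * (n : ℝ) + c * t)) := by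
      rw [show -2 * k * ((n : ℝ) - 1 - 1) + c * t
          = k + k + (k + k + (-2 * k * (n : ℝ) + c * t)) by ring,
        Real.exp_add, Real.exp_add, Real.exp_add, Real.exp_add]
    have e3 : Real.exp (-2 * k * ((n : ℝ) + 1) + c * t)
        = Real.exp (-2 * k * (n : ℝ) + c * t) / (Real.exp k * Real.exp k) := by
      rw [show -2 * k * ((n : ℝ) + 1) + c * t = -2 * k * (n : ℝ) + c * t - (k + k) by ring,
        Real.exp_sub, Real.exp_add k k]
    have e4 : Real.exp (-2 * k * ((n : ℝ) + 1 - 1) + c * t)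
        = Real.exp (-2 * k * (n : ℝ) + c * t) := by norm_num
    have hc2 : c ^ 2 = (Real.exp k - (Real.exp k)⁻¹) ^ 2 := by
      rcases hσ with h | h <;>
        rw [hc, h, Real.sinh_eq, Real.exp_neg] <;> ring
    rw [e1, e2, e3, e4, hc2]
    set u : ℝ := Real.exp (-2 * k * (n : ℝ) + c * t) with hu
    set r : ℝ := Real.exp k with hrr
    have hr : (0:ℝ) < r := Real.exp_pos k
    have hup : (0:ℝ) < u := Real.exp_pos _
    have h1 : (0:ℝ) < 1 + u := by positivity
    have h2 : (0:ℝ) < 1 + r * r * u := by positivity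
    have h3 : (0:ℝ) < 1 + r * r * (r * r * u) := by positivity
    have h4 : (0:ℝ) < 1 + u / (r * r) := by positivity
    field_simp
    ring
end

section
/- Let k₁, k₂ > 0 with k₁ ≠ k₂, let β₁, β₂ ∈ ℝ satisfy β_i² = sinh² k_i for i = 1, 2, and let A₁, A₂ > 0 satisfy A₁A₂ = [ (β₁+β₂)² − sinh²(k₁+k₂) ] / [ sinh²(k₁−k₂) − (β₁−β₂)² ] (assuming the right-hand side is positive). Define S_n(t) = ln{ 1 + A₁ exp[2(k₁ n − β₁ t)] + A₂ exp[2(k₂ n − β₂ t)] + exp[2(k₁+k₂) n − 2(β₁+β₂) t] } and x_n(t) = S_{n−1}(t) − S_n(t). Then x satisfies the Toda lattice equation ẍ_n = e^{x_{n−1} − x_n} − e^{x_n − x_{n+1}} for all n ∈ ℤ and t ∈ ℝ. -/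
open Real in
lemma exp_shift_up (a d : ℝ) (m : ℤ) :
    Real.exp (2 * a * ((m + 1 : ℤ) : ℝ) + d)
      = Real.exp a ^ 2 * Real.exp (2 * a * (m : ℝ) + d) := by
  rw [sq, mul_assoc, ← Real.exp_add, ← Real.exp_add]; congr 1; push_cast; ring

lemma exp_shift_down (a d : ℝ) (m : ℤ) :
    Real.exp (2 * a * ((m - 1 : ℤ) : ℝ) + d)
      = Real.exp (-a) ^ 2 * Real.exp (2 * a * (m : ℝ) + d) := by
  rw [sq, mul_assoc, ← Real.exp_add, ← Real.exp_add]; congr 1; push_cast; ring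

lemma toda_key (A1 A2 b1 b2 s sp r rp P Q : ℝ)
    (h1 : b1 ^ 2 = ((s - sp) / 2) ^ 2)
    (h2 : b2 ^ 2 = ((r - rp) / 2) ^ 2)
    (h3 : A1 * A2 * (((s * rp - sp * r) / 2) ^ 2 - (b1 - b2) ^ 2)
        = (b1 + b2) ^ 2 - ((s * r - sp * rp) / 2) ^ 2)
    (hss : s * sp = 1) (hrr : r * rp = 1) :
    ((-(2 * b1)) ^ 2 * (A1 * P) + (-(2 * b2)) ^ 2 * (A2 * Q)
        + (-(2 * (b1 + b2))) ^ 2 * (P * Q))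
      * (1 + A1 * P + A2 * Q + P * Q)
    - (-(2 * b1) * (A1 * P) + -(2 * b2) * (A2 * Q) + -(2 * (b1 + b2)) * (P * Q)) ^ 2
    = (1 + A1 * (sp ^ 2 * P) + A2 * (rp ^ 2 * Q) + (sp ^ 2 * P) * (rp ^ 2 * Q))
        * (1 + A1 * (s ^ 2 * P) + A2 * (r ^ 2 * Q) + (s ^ 2 * P) * (r ^ 2 * Q))
      - (1 + A1 * P + A2 * Q + P * Q) ^ 2 := by
  linear_combination (4 * P * (A1 + A2 * Q ^ 2)) * h1 + (4 * Q * (A2 + A1 * P ^ 2)) * h2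
    + (-(4 * P * Q)) * h3
    + (-(2 * r * rp * P * Q + r ^ 2 * rp ^ 2 * P ^ 2 * Q ^ 2
        + s * sp * r ^ 2 * rp ^ 2 * P ^ 2 * Q ^ 2 + 2 * A2 * P * Q ^ 2 + 2 * A1 * P
        + A1 * rp ^ 2 * P ^ 2 * Q + A1 * r ^ 2 * P ^ 2 * Q
        + A1 * s * sp * rp ^ 2 * P ^ 2 * Q + A1 * s * sp * r ^ 2 * P ^ 2 * Q
        + 2 * A1 * A2 * r * rp * P * Q + A1 ^ 2 * P ^ 2 + A1 ^ 2 * s * sp * P ^ 2)) * hss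
    + (-(2 * P * Q + P ^ 2 * Q ^ 2 + r * rp * P ^ 2 * Q ^ 2 + 2 * A2 * Q
        + A2 * sp ^ 2 * P * Q ^ 2 + A2 * sp ^ 2 * r * rp * P * Q ^ 2
        + A2 * s ^ 2 * P * Q ^ 2 + A2 * s ^ 2 * r * rp * P * Q ^ 2
        + A2 ^ 2 * Q ^ 2 + A2 ^ 2 * r * rp * Q ^ 2 + 2 * A1 * P ^ 2 * Q
        + 2 * A1 * A2 * P * Q)) * hrr

noncomputable def tG (k₁ k₂ β₁ β₂ A₁ A₂ : ℝ) (n : ℤ) (t : ℝ) : ℝ :=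
  1 + A₁ * Real.exp (2 * k₁ * n + -(2 * β₁) * t)
    + A₂ * Real.exp (2 * k₂ * n + -(2 * β₂) * t)
    + Real.exp (2 * (k₁ + k₂) * n + -(2 * (β₁ + β₂)) * t)

noncomputable def tG1 (k₁ k₂ β₁ β₂ A₁ A₂ : ℝ) (n : ℤ) (t : ℝ) : ℝ :=
  -(2 * β₁) * (A₁ * Real.exp (2 * k₁ * n + -(2 * β₁) * t))
    + -(2 * β₂) * (A₂ * Real.exp (2 * k₂ * n + -(2 * β₂) * t))
    + -(2 * (β₁ + β₂)) * Real.exp (2 * (k₁ + k₂) * n + -(2 * (β₁ + β₂)) * t)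

noncomputable def tG2 (k₁ k₂ β₁ β₂ A₁ A₂ : ℝ) (n : ℤ) (t : ℝ) : ℝ :=
  (-(2 * β₁)) ^ 2 * (A₁ * Real.exp (2 * k₁ * n + -(2 * β₁) * t))
    + (-(2 * β₂)) ^ 2 * (A₂ * Real.exp (2 * k₂ * n + -(2 * β₂) * t))
    + (-(2 * (β₁ + β₂))) ^ 2 * Real.exp (2 * (k₁ + k₂) * n + -(2 * (β₁ + β₂)) * t)


lemma tG_def (k₁ k₂ β₁ β₂ A₁ A₂ : ℝ) (n : ℤ) (t : ℝ) : tG k₁ k₂ β₁ β₂ A₁ A₂ n t =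
  1 + A₁ * Real.exp (2 * k₁ * n + -(2 * β₁) * t)
    + A₂ * Real.exp (2 * k₂ * n + -(2 * β₂) * t)
    + Real.exp (2 * (k₁ + k₂) * n + -(2 * (β₁ + β₂)) * t) := rfl

lemma tG_pos (k₁ k₂ β₁ β₂ A₁ A₂ : ℝ) (hA₁ : 0 < A₁) (hA₂ : 0 < A₂) (n : ℤ) (t : ℝ) :
    0 < tG k₁ k₂ β₁ β₂ A₁ A₂ n t := by
  unfold tG; positivity

lemma hasDerivAt_explin (c d t : ℝ) :
    HasDerivAt (fun t => Real.exp (c + d * t)) (d * Real.exp (c + d * t)) t := by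
  have h : HasDerivAt (fun t : ℝ => c + d * t) d t := by
    simpa using ((hasDerivAt_id t).const_mul d).const_add c
  simpa [mul_comm] using h.exp

lemma hasDerivAt_tG (k₁ k₂ β₁ β₂ A₁ A₂ : ℝ) (n : ℤ) (t : ℝ) :
    HasDerivAt (tG k₁ k₂ β₁ β₂ A₁ A₂ n) (tG1 k₁ k₂ β₁ β₂ A₁ A₂ n t) t := by
  unfold tG tG1
  have h1 := (hasDerivAt_explin (2 * k₁ * n) (-(2 * β₁)) t).const_mul A₁
  have h2 := (hasDerivAt_explin (2 * k₂ * n) (-(2 * β₂)) t).const_mul A₂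
  have h3 := hasDerivAt_explin (2 * (k₁ + k₂) * n) (-(2 * (β₁ + β₂))) t
  have h := ((h1.const_add 1).add h2).add h3
  refine h.congr_deriv ?_
  ring

lemma hasDerivAt_tG1 (k₁ k₂ β₁ β₂ A₁ A₂ : ℝ) (n : ℤ) (t : ℝ) :
    HasDerivAt (tG1 k₁ k₂ β₁ β₂ A₁ A₂ n) (tG2 k₁ k₂ β₁ β₂ A₁ A₂ n t) t := by
  unfold tG1 tG2
  have h1 := ((hasDerivAt_explin (2 * k₁ * n) (-(2 * β₁)) t).const_mul A₁).const_mul (-(2 * β₁))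
  have h2 := ((hasDerivAt_explin (2 * k₂ * n) (-(2 * β₂)) t).const_mul A₂).const_mul (-(2 * β₂))
  have h3 := (hasDerivAt_explin (2 * (k₁ + k₂) * n) (-(2 * (β₁ + β₂))) t).const_mul
      (-(2 * (β₁ + β₂)))
  have h := (h1.add h2).add h3
  refine h.congr_deriv ?_
  ring

lemma toda_bilinear (k₁ k₂ β₁ β₂ A₁ A₂ : ℝ)
    (hβ₁ : β₁ ^ 2 = Real.sinh k₁ ^ 2) (hβ₂ : β₂ ^ 2 = Real.sinh k₂ ^ 2)
    (h3 : A₁ * A₂ * (Real.sinh (k₁ - k₂) ^ 2 - (β₁ - β₂) ^ 2)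
        = (β₁ + β₂) ^ 2 - Real.sinh (k₁ + k₂) ^ 2)
    (n : ℤ) (t : ℝ) :
    tG2 k₁ k₂ β₁ β₂ A₁ A₂ n t * tG k₁ k₂ β₁ β₂ A₁ A₂ n t
      - tG1 k₁ k₂ β₁ β₂ A₁ A₂ n t ^ 2
    = tG k₁ k₂ β₁ β₂ A₁ A₂ (n - 1) t * tG k₁ k₂ β₁ β₂ A₁ A₂ (n + 1) t
      - tG k₁ k₂ β₁ β₂ A₁ A₂ n t ^ 2 := by
  have hss : Real.exp k₁ * Real.exp (-k₁) = 1 := by rw [← Real.exp_add]; simp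
  have hrr : Real.exp k₂ * Real.exp (-k₂) = 1 := by rw [← Real.exp_add]; simp
  have h1' : β₁ ^ 2 = ((Real.exp k₁ - Real.exp (-k₁)) / 2) ^ 2 := by
    rw [hβ₁, Real.sinh_eq]
  have h2' : β₂ ^ 2 = ((Real.exp k₂ - Real.exp (-k₂)) / 2) ^ 2 := by
    rw [hβ₂, Real.sinh_eq]
  have hsm : Real.sinh (k₁ - k₂)
      = (Real.exp k₁ * Real.exp (-k₂) - Real.exp (-k₁) * Real.exp k₂) / 2 := by
    rw [Real.sinh_eq, show k₁ - k₂ = k₁ + -k₂ from by ring,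
      show -(k₁ + -k₂) = -k₁ + k₂ from by ring, Real.exp_add, Real.exp_add]
  have hsp : Real.sinh (k₁ + k₂)
      = (Real.exp k₁ * Real.exp k₂ - Real.exp (-k₁) * Real.exp (-k₂)) / 2 := by
    rw [Real.sinh_eq, show -(k₁ + k₂) = -k₁ + -k₂ from by ring, Real.exp_add, Real.exp_add]
  rw [hsm, hsp] at h3
  have hC : Real.exp (2 * (k₁ + k₂) * (n : ℝ) + -(2 * (β₁ + β₂)) * t)
      = Real.exp (2 * k₁ * (n : ℝ) + -(2 * β₁) * t)
        * Real.exp (2 * k₂ * (n : ℝ) + -(2 * β₂) * t) := by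
    rw [← Real.exp_add]; congr 1; ring
  unfold tG tG1 tG2
  rw [exp_shift_up k₁, exp_shift_up k₂, exp_shift_up (k₁ + k₂),
    exp_shift_down k₁, exp_shift_down k₂, exp_shift_down (k₁ + k₂),
    Real.exp_add k₁ k₂, show -(k₁ + k₂) = -k₁ + -k₂ from by ring, Real.exp_add (-k₁) (-k₂), hC]
  linear_combination toda_key A₁ A₂ β₁ β₂ (Real.exp k₁) (Real.exp (-k₁)) (Real.exp k₂)
    (Real.exp (-k₂)) (Real.exp (2 * k₁ * (n : ℝ) + -(2 * β₁) * t))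
    (Real.exp (2 * k₂ * (n : ℝ) + -(2 * β₂) * t)) h1' h2' h3 hss hrr

/-- The Toda two-soliton in exponential form,
`x_n = S_{n−1} − S_n` with
`S_n(t) = ln{1 + A₁e^{2(k₁n−β₁t)} + A₂e^{2(k₂n−β₂t)} + e^{2(k₁+k₂)n − 2(β₁+β₂)t}}`,
`β_i² = sinh²k_i` and `A₁A₂ = [(β₁+β₂)² − sinh²(k₁+k₂)]/[sinh²(k₁−k₂) − (β₁−β₂)²]`,
solves the Toda lattice `ẍ_n = e^{x_{n−1} − x_n} − e^{x_n − x_{n+1}}`. -/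
theorem toda_two_soliton_exponential
    (k₁ k₂ : ℝ) (hk₁ : 0 < k₁) (hk₂ : 0 < k₂) (hne : k₁ ≠ k₂)
    (β₁ β₂ : ℝ) (hβ₁ : β₁ ^ 2 = Real.sinh k₁ ^ 2) (hβ₂ : β₂ ^ 2 = Real.sinh k₂ ^ 2)
    (A₁ A₂ : ℝ) (hA₁ : 0 < A₁) (hA₂ : 0 < A₂)
    (hratio : 0 < ((β₁ + β₂) ^ 2 - Real.sinh (k₁ + k₂) ^ 2) /
        (Real.sinh (k₁ - k₂) ^ 2 - (β₁ - β₂) ^ 2))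
    (hA : A₁ * A₂ = ((β₁ + β₂) ^ 2 - Real.sinh (k₁ + k₂) ^ 2) /
        (Real.sinh (k₁ - k₂) ^ 2 - (β₁ - β₂) ^ 2))
    (S : ℤ → ℝ → ℝ)
    (hS : ∀ (n : ℤ) (t : ℝ),
      S n t = Real.log
        (1 + A₁ * Real.exp (2 * (k₁ * (n : ℝ) - β₁ * t))
           + A₂ * Real.exp (2 * (k₂ * (n : ℝ) - β₂ * t))
           + Real.exp (2 * (k₁ + k₂) * (n : ℝ) - 2 * (β₁ + β₂) * t)))
    (x : ℤ → ℝ → ℝ)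
    (hx : ∀ (n : ℤ) (t : ℝ), x n t = S (n - 1) t - S n t) :
    ∀ (n : ℤ) (t : ℝ),
      deriv (deriv (x n)) t =
        Real.exp (x (n - 1) t - x n t) - Real.exp (x n t - x (n + 1) t) := by
  -- ratio denominator is nonzero, so the bilinear coupling identity holds
  have hD : Real.sinh (k₁ - k₂) ^ 2 - (β₁ - β₂) ^ 2 ≠ 0 := by
    intro h
    rw [h, div_zero] at hratio
    exact lt_irrefl 0 hratio
  rw [eq_div_iff hD] at hA
  have hGpos : ∀ (m : ℤ) (τ : ℝ), 0 < tG k₁ k₂ β₁ β₂ A₁ A₂ m τ :=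
    tG_pos k₁ k₂ β₁ β₂ A₁ A₂ hA₁ hA₂
  have hSlog : ∀ (m : ℤ) (τ : ℝ), S m τ = Real.log (tG k₁ k₂ β₁ β₂ A₁ A₂ m τ) := by
    intro m τ
    rw [hS, tG_def,
      show 2 * (k₁ * (m : ℝ) - β₁ * τ) = 2 * k₁ * m + -(2 * β₁) * τ from by ring,
      show 2 * (k₂ * (m : ℝ) - β₂ * τ) = 2 * k₂ * m + -(2 * β₂) * τ from by ring,
      show 2 * (k₁ + k₂) * (m : ℝ) - 2 * (β₁ + β₂) * τ
        = 2 * (k₁ + k₂) * m + -(2 * (β₁ + β₂)) * τ from by ring]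
  have hxlog : ∀ (m : ℤ) (τ : ℝ), x m τ =
      Real.log (tG k₁ k₂ β₁ β₂ A₁ A₂ (m - 1) τ) - Real.log (tG k₁ k₂ β₁ β₂ A₁ A₂ m τ) := by
    intro m τ
    rw [hx, hSlog, hSlog]
  have hx1 : ∀ (m : ℤ) (τ : ℝ), HasDerivAt (x m)
      (tG1 k₁ k₂ β₁ β₂ A₁ A₂ (m - 1) τ / tG k₁ k₂ β₁ β₂ A₁ A₂ (m - 1) τ
        - tG1 k₁ k₂ β₁ β₂ A₁ A₂ m τ / tG k₁ k₂ β₁ β₂ A₁ A₂ m τ) τ := by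
    intro m τ
    have hfun : x m = fun τ => Real.log (tG k₁ k₂ β₁ β₂ A₁ A₂ (m - 1) τ)
        - Real.log (tG k₁ k₂ β₁ β₂ A₁ A₂ m τ) := funext (hxlog m)
    rw [hfun]
    exact ((hasDerivAt_tG k₁ k₂ β₁ β₂ A₁ A₂ (m - 1) τ).log (hGpos (m - 1) τ).ne').sub
      ((hasDerivAt_tG k₁ k₂ β₁ β₂ A₁ A₂ m τ).log (hGpos m τ).ne')
  intro n t
  have hdx : deriv (x n) = fun τ =>
      tG1 k₁ k₂ β₁ β₂ A₁ A₂ (n - 1) τ / tG k₁ k₂ β₁ β₂ A₁ A₂ (n - 1) τ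
        - tG1 k₁ k₂ β₁ β₂ A₁ A₂ n τ / tG k₁ k₂ β₁ β₂ A₁ A₂ n τ :=
    funext fun τ => (hx1 n τ).deriv
  have hx2 : HasDerivAt (fun τ =>
      tG1 k₁ k₂ β₁ β₂ A₁ A₂ (n - 1) τ / tG k₁ k₂ β₁ β₂ A₁ A₂ (n - 1) τ
        - tG1 k₁ k₂ β₁ β₂ A₁ A₂ n τ / tG k₁ k₂ β₁ β₂ A₁ A₂ n τ)
      ((tG2 k₁ k₂ β₁ β₂ A₁ A₂ (n - 1) t * tG k₁ k₂ β₁ β₂ A₁ A₂ (n - 1) t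
          - tG1 k₁ k₂ β₁ β₂ A₁ A₂ (n - 1) t * tG1 k₁ k₂ β₁ β₂ A₁ A₂ (n - 1) t)
          / tG k₁ k₂ β₁ β₂ A₁ A₂ (n - 1) t ^ 2
        - (tG2 k₁ k₂ β₁ β₂ A₁ A₂ n t * tG k₁ k₂ β₁ β₂ A₁ A₂ n t
          - tG1 k₁ k₂ β₁ β₂ A₁ A₂ n t * tG1 k₁ k₂ β₁ β₂ A₁ A₂ n t)
          / tG k₁ k₂ β₁ β₂ A₁ A₂ n t ^ 2) t :=
    (((hasDerivAt_tG1 k₁ k₂ β₁ β₂ A₁ A₂ (n - 1) t).div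
        (hasDerivAt_tG k₁ k₂ β₁ β₂ A₁ A₂ (n - 1) t) (hGpos (n - 1) t).ne')).sub
      (((hasDerivAt_tG1 k₁ k₂ β₁ β₂ A₁ A₂ n t).div
        (hasDerivAt_tG k₁ k₂ β₁ β₂ A₁ A₂ n t) (hGpos n t).ne'))
  rw [hdx, hx2.deriv]
  -- rewrite the right-hand side exponentials
  have hE1 : Real.exp (x (n - 1) t - x n t)
      = tG k₁ k₂ β₁ β₂ A₁ A₂ (n - 1 - 1) t * tG k₁ k₂ β₁ β₂ A₁ A₂ n t
        / tG k₁ k₂ β₁ β₂ A₁ A₂ (n - 1) t ^ 2 := by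
    rw [hxlog, hxlog, Real.exp_sub, Real.exp_sub, Real.exp_sub,
      Real.exp_log (hGpos _ t), Real.exp_log (hGpos _ t), Real.exp_log (hGpos _ t)]
    field_simp
  have hE2 : Real.exp (x n t - x (n + 1) t)
      = tG k₁ k₂ β₁ β₂ A₁ A₂ (n - 1) t * tG k₁ k₂ β₁ β₂ A₁ A₂ (n + 1) t
        / tG k₁ k₂ β₁ β₂ A₁ A₂ n t ^ 2 := by
    rw [hxlog, hxlog, show n + 1 - 1 = n from by ring, Real.exp_sub, Real.exp_sub,
      Real.exp_sub, Real.exp_log (hGpos _ t), Real.exp_log (hGpos _ t),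
      Real.exp_log (hGpos _ t)]
    field_simp
  rw [hE1, hE2]
  have b1 := toda_bilinear k₁ k₂ β₁ β₂ A₁ A₂ hβ₁ hβ₂ hA (n - 1) t
  have b2 := toda_bilinear k₁ k₂ β₁ β₂ A₁ A₂ hβ₁ hβ₂ hA n t
  rw [show n - 1 + 1 = n from by ring] at b1
  have b1' : tG2 k₁ k₂ β₁ β₂ A₁ A₂ (n - 1) t * tG k₁ k₂ β₁ β₂ A₁ A₂ (n - 1) t
      - tG1 k₁ k₂ β₁ β₂ A₁ A₂ (n - 1) t * tG1 k₁ k₂ β₁ β₂ A₁ A₂ (n - 1) t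
      = tG k₁ k₂ β₁ β₂ A₁ A₂ (n - 1 - 1) t * tG k₁ k₂ β₁ β₂ A₁ A₂ n t
        - tG k₁ k₂ β₁ β₂ A₁ A₂ (n - 1) t ^ 2 := by linear_combination b1
  have b2' : tG2 k₁ k₂ β₁ β₂ A₁ A₂ n t * tG k₁ k₂ β₁ β₂ A₁ A₂ n t
      - tG1 k₁ k₂ β₁ β₂ A₁ A₂ n t * tG1 k₁ k₂ β₁ β₂ A₁ A₂ n t
      = tG k₁ k₂ β₁ β₂ A₁ A₂ (n - 1) t * tG k₁ k₂ β₁ β₂ A₁ A₂ (n + 1) t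
        - tG k₁ k₂ β₁ β₂ A₁ A₂ n t ^ 2 := by linear_combination b2
  rw [b1', b2', sub_div, sub_div,
    div_self (pow_ne_zero 2 (hGpos (n - 1) t).ne'),
    div_self (pow_ne_zero 2 (hGpos n t).ne')]
  ring
end
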